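/- (Feasibility violation bound.) For every k ≥ 0 the iterates of the inexact primal–dual algorithm satisfy λ_k − λ₀ = β_k^{-1}(Hu_k − b) − (Hu₀ − b) + Σ_{i=0}^{k−1} E_i, where E_i := λ_{i+1} − λ_{i+1}^{#} + β_{i+1}^{-1} H (u_{i+1}^{#} − u_{i+1}) satisfies ‖E_i‖ ≤ ε_i (1 + α_i² β_i^{-2} ‖H‖²). Consequently, ‖Hu_k − b‖ ≤ β_k ( ‖Hu₀ − b‖ + ‖λ_k − λ₀‖ + Σ_{i=0}^{k−1} ε_i (1 + α_i² β_i^{-2} ‖H‖²) ), where β_k = ∏_{i=0}^{k−1} 1/(1+α_i). -/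

import Mathlib

open scoped RealInnerProductSpace
open Matrix Finset

/-- Index type for the primal variable `u = (x, y, z) ∈ ℝ^{mn} × ℝⁿ × ℝᵐ`. -/
abbrev PIdx (m n : ℕ) := Fin (m * n) ⊕ (Fin n ⊕ Fin m)

/-- The primal space `ℝ^{mn} × ℝⁿ × ℝᵐ` with the Euclidean norm. -/
abbrev PrimalSpace (m n : ℕ) := EuclideanSpace ℝ (PIdx m n)

/-- The dual (multiplier) space `ℝ^{m+n+r}` with the Euclidean norm. -/
abbrev DualSpace (m n r : ℕ) := EuclideanSpace ℝ (Fin (m + n + r))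

/-- Matrix-vector multiplication regarded as a map between Euclidean spaces. -/
noncomputable def mv {a b : Type*} [Fintype a] [Fintype b]
    (A : Matrix a b ℝ) (x : EuclideanSpace ℝ b) : EuclideanSpace ℝ a :=
  (WithLp.equiv 2 _).symm (A.mulVec ((WithLp.equiv 2 _) x))

/-- The spectral (operator `ℓ²`) norm of a real matrix. -/
noncomputable def specNorm {a b : Type*} [Fintype a] [Fintype b] [DecidableEq b]
    (A : Matrix a b ℝ) : ℝ :=
  ‖LinearMap.toContinuousLinearMap (Matrix.toEuclideanLin A)‖

/-- All data of the inexact primal-dual algorithm for the generalized transport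
problem `min h(x)` over `u = (x,y,z) ∈ Σ` s.t. `Hu = b`, together with the
produced iterates. -/
structure PDSetting (m n r : ℕ) where
  /-- the strong convexity parameter `σ ≥ 0` of `h` -/
  sigma : ℝ
  /-- the vector `φ` in `h(x) = (σ/2)‖x − φ‖² + cᵀx` -/
  phi : EuclideanSpace ℝ (Fin (m * n))
  /-- the cost vector `c` -/
  c : EuclideanSpace ℝ (Fin (m * n))
  /-- the constraint matrix `H` -/
  H : Matrix (Fin (m + n + r)) (PIdx m n) ℝ
  /-- the constraint right-hand side `b` -/
  b : DualSpace m n r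
  /-- the intervals whose product is the box `Σ` -/
  box : PIdx m n → Set ℝ
  /-- the Euclidean projection onto `Σ` -/
  proj : PrimalSpace m n → PrimalSpace m n
  /-- the step sizes `α_k > 0` -/
  alpha : ℕ → ℝ
  /-- the tolerances `ε_k > 0` -/
  eps : ℕ → ℝ
  /-- the primal iterates `u_k` -/
  u : ℕ → PrimalSpace m n
  /-- the auxiliary iterates `v_k` -/
  v : ℕ → PrimalSpace m n
  /-- the dual iterates `λ_k` -/
  lam : ℕ → DualSpace m n r
  /-- `lamS k` is the exact solution `λ_{k+1}^{#}`, the unique zero of `F_k` -/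
  lamS : ℕ → DualSpace m n r
  /-- a primal solution `u* = (x*, y*, z*)` -/
  ustar : PrimalSpace m n
  /-- a dual solution `λ*` -/
  lamstar : DualSpace m n r

/-- The `x`-component of a primal vector `u = (x,y,z)`. -/
noncomputable def xPart {m n : ℕ} (u : PrimalSpace m n) : EuclideanSpace ℝ (Fin (m * n)) :=
  (WithLp.equiv 2 _).symm fun i => u (Sum.inl i)

namespace PDSetting

variable {m n r : ℕ} (S : PDSetting m n r)

/-- `β_k = ∏_{i=0}^{k-1} 1/(1+α_i)`, i.e. `β₀ = 1`, `β_{k+1} = β_k/(1+α_k)`. -/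
noncomputable def beta (k : ℕ) : ℝ := ∏ i ∈ range k, (1 + S.alpha i)⁻¹

/-- `τ_k = β_k (1+α_k)/α_k²`. -/
noncomputable def tau (k : ℕ) : ℝ := S.beta k * (1 + S.alpha k) / (S.alpha k) ^ 2

/-- `η_k = σ + τ_k`. -/
noncomputable def eta (k : ℕ) : ℝ := S.sigma + S.tau k

/-- The diagonal of `D_k = diag(η_k I_{mn}, τ_k Iₙ, τ_k Iₘ)`. -/
noncomputable def dEntry (k : ℕ) : PIdx m n → ℝ :=
  Sum.elim (fun _ => S.eta k) (fun _ => S.tau k)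

/-- The matrix `D_k`. -/
noncomputable def Dmat (k : ℕ) : Matrix (PIdx m n) (PIdx m n) ℝ :=
  Matrix.diagonal (S.dEntry k)

/-- The objective `h(x) = (σ/2)‖x − φ‖² + cᵀx`, as a function of `u`. -/
noncomputable def hObj (u : PrimalSpace m n) : ℝ :=
  S.sigma / 2 * ‖xPart u - S.phi‖ ^ 2 + ⟪S.c, xPart u⟫

/-- The vector `c̃ = (σφ − c, 0ₙ, 0ₘ)`. -/
noncomputable def ctil : PrimalSpace m n :=
  (WithLp.equiv 2 _).symm (Sum.elim (fun i => S.sigma * S.phi i - S.c i) fun _ => 0)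

/-- The box `Σ = 𝒳 × 𝒴 × 𝒵`. -/
def SigmaSet : Set (PrimalSpace m n) := {u | ∀ i, u i ∈ S.box i}

/-- The Lagrangian `𝓛(u, λ) = h(x) + ⟨λ, Hu − b⟩` (for `u ∈ Σ`). -/
noncomputable def Lag (u : PrimalSpace m n) (lam : DualSpace m n r) : ℝ :=
  S.hObj u + ⟪lam, mv S.H u - S.b⟫

/-- `w_k = c̃ + β_k (u_k + α_k v_k)/α_k²`. -/
noncomputable def wk (k : ℕ) : PrimalSpace m n :=
  S.ctil + (S.beta k / (S.alpha k) ^ 2) • (S.u k + S.alpha k • S.v k)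

/-- `λ̃_k = β_{k+1} [λ_k − β_k⁻¹ (Hu_k − b)] − b`. -/
noncomputable def lamTil (k : ℕ) : DualSpace m n r :=
  S.beta (k + 1) • (S.lam k - (S.beta k)⁻¹ • (mv S.H (S.u k) - S.b)) - S.b

/-- `F_k(λ) = β_{k+1} λ − H proj_Σ(D_k⁻¹(w_k − Hᵀλ)) − λ̃_k`. -/
noncomputable def Fk (k : ℕ) (lam : DualSpace m n r) : DualSpace m n r :=
  S.beta (k + 1) • lam -
    mv S.H (S.proj (mv (S.Dmat k)⁻¹ (S.wk k - mv S.Hᵀ lam))) - S.lamTil k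

/-- `u_{k+1}^{#} = proj_Σ(D_k⁻¹(w_k − Hᵀ λ_{k+1}^{#}))`. -/
noncomputable def uS (k : ℕ) : PrimalSpace m n :=
  S.proj (mv (S.Dmat k)⁻¹ (S.wk k - mv S.Hᵀ (S.lamS k)))

/-- `v_{k+1}^{#} = u_{k+1}^{#} + (u_{k+1}^{#} − u_k)/α_k`. -/
noncomputable def vS (k : ℕ) : PrimalSpace m n :=
  S.uS k + (S.alpha k)⁻¹ • (S.uS k - S.u k)

/-- The discrete Lyapunov function
`𝓔(β,u,v,λ) = 𝓛(u,λ*) − 𝓛(u*,λ) + (β/2)(‖v − u*‖² + ‖λ − λ*‖²)`. -/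
noncomputable def Lyap (βv : ℝ) (u v : PrimalSpace m n) (lam : DualSpace m n r) : ℝ :=
  S.Lag u S.lamstar - S.Lag S.ustar lam +
    βv / 2 * (‖v - S.ustar‖ ^ 2 + ‖lam - S.lamstar‖ ^ 2)

/-- `𝓔_k`. -/
noncomputable def E (k : ℕ) : ℝ := S.Lyap (S.beta k) (S.u k) (S.v k) (S.lam k)

/-- `𝓔_{k+1}^{#}`, the Lyapunov function at the exact update of step `k`. -/
noncomputable def ESharp (k : ℕ) : ℝ :=
  S.Lyap (S.beta (k + 1)) (S.uS k) (S.vS k) (S.lamS k)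

/-- `ε̂_k = ∑_{i<k} ε_i α_i² β_i⁻²`. -/
noncomputable def epsHat (k : ℕ) : ℝ :=
  ∑ i ∈ range k, S.eps i * (S.alpha i) ^ 2 / (S.beta i) ^ 2

/-- `ε̃_k = ∑_{i<k} ε_i β_i^{-3/2} (α_i² + α_i √β_i + β_i^{3/2})`. -/
noncomputable def epsTil (k : ℕ) : ℝ :=
  ∑ i ∈ range k, S.eps i / (S.beta i) ^ ((3 : ℝ) / 2) *
    ((S.alpha i) ^ 2 + S.alpha i * Real.sqrt (S.beta i) + (S.beta i) ^ ((3 : ℝ) / 2))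

/-- `Z = ‖H‖(σ‖x*‖ + ‖Hᵀλ* − c̃‖)`. -/
noncomputable def Z : ℝ :=
  specNorm S.H * (S.sigma * ‖xPart S.ustar‖ + ‖mv S.Hᵀ S.lamstar - S.ctil‖)

/-- `Q = 1 + (1 + √σ)‖H‖`. -/
noncomputable def Q : ℝ := 1 + (1 + Real.sqrt S.sigma) * specNorm S.H

/-- All hypotheses of the inexact primal–dual algorithm: the box is a nonempty
closed product of intervals, `proj` is the nearest-point projection onto it,
`(u*, λ*)` is a saddle point, the iterates follow the algorithm with inexactness
`‖λ_{k+1} − λ_{k+1}^{#}‖ ≤ ε_k`, and the exact one-step contraction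
`𝓔_{k+1}^{#} − 𝓔_k ≤ −α_k 𝓔_{k+1}^{#}` holds. -/
structure IsValid : Prop where
  hsigma : 0 ≤ S.sigma
  hbox_ne : ∀ i, (S.box i).Nonempty
  hbox_cl : ∀ i, IsClosed (S.box i)
  hbox_int : ∀ i, (S.box i).OrdConnected
  hproj_mem : ∀ x, S.proj x ∈ S.SigmaSet
  hproj_near : ∀ x, ∀ y ∈ S.SigmaSet, dist x (S.proj x) ≤ dist x y
  halpha : ∀ k, 0 < S.alpha k
  heps : ∀ k, 0 < S.eps k
  hustar : S.ustar ∈ S.SigmaSet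
  hfeas : mv S.H S.ustar = S.b
  hsaddle : ∀ u ∈ S.SigmaSet, S.Lag S.ustar S.lamstar ≤ S.Lag u S.lamstar
  hu0 : S.u 0 ∈ S.SigmaSet
  hlamS : ∀ k, S.Fk k (S.lamS k) = 0
  hlam_err : ∀ k, ‖S.lam (k + 1) - S.lamS k‖ ≤ S.eps k
  hu_upd : ∀ k, S.u (k + 1) = S.proj (mv (S.Dmat k)⁻¹ (S.wk k - mv S.Hᵀ (S.lam (k + 1))))
  hv_upd : ∀ k, S.v (k + 1) = S.u (k + 1) + (S.alpha k)⁻¹ • (S.u (k + 1) - S.u k)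
  hcontract : ∀ k, S.ESharp k - S.E k ≤ -S.alpha k * S.ESharp k

end PDSetting

section MVAux
variable {a b : Type*} [Fintype a] [Fintype b]

lemma mv_eq_lin [DecidableEq b] (A : Matrix a b ℝ) (x : EuclideanSpace ℝ b) :
    mv A x = Matrix.toEuclideanLin A x := rfl

lemma mv_sub [DecidableEq b] (A : Matrix a b ℝ) (x y : EuclideanSpace ℝ b) :
    mv A (x - y) = mv A x - mv A y := by
  simp only [mv_eq_lin, map_sub]

lemma norm_mv_le [DecidableEq b] (A : Matrix a b ℝ) (x : EuclideanSpace ℝ b) :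
    ‖mv A x‖ ≤ specNorm A * ‖x‖ := by
  rw [mv_eq_lin]
  have := (LinearMap.toContinuousLinearMap (Matrix.toEuclideanLin A)).le_opNorm x
  simpa [specNorm] using this

lemma specNorm_transpose [DecidableEq a] [DecidableEq b] (A : Matrix a b ℝ) :
    specNorm Aᵀ = specNorm A := by
  have h : Aᵀ = Aᴴ := by ext i j; simp [Matrix.conjTranspose_apply]
  rw [h, specNorm, Matrix.toEuclideanLin_conjTranspose_eq_adjoint,
    LinearMap.adjoint_toContinuousLinearMap]
  exact LinearIsometryEquiv.norm_map ContinuousLinearMap.adjoint _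

lemma norm_mv_diagonal_le {ι : Type*} [Fintype ι] [DecidableEq ι] (d : ι → ℝ) (c : ℝ)
    (hc : 0 ≤ c) (hd : ∀ i, |d i| ≤ c) (z : EuclideanSpace ℝ ι) :
    ‖mv (Matrix.diagonal d) z‖ ≤ c * ‖z‖ := by
  rw [EuclideanSpace.norm_eq, EuclideanSpace.norm_eq, ← Real.sqrt_sq hc,
    ← Real.sqrt_mul (sq_nonneg c)]
  apply Real.sqrt_le_sqrt
  rw [Finset.mul_sum]
  apply Finset.sum_le_sum
  intro i _
  have h1 : mv (Matrix.diagonal d) z i = d i * z i := by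
    simp [mv, Matrix.mulVec_diagonal]
  rw [h1]
  have h3 : ‖d i * z i‖ ^ 2 = (d i) ^ 2 * ‖z i‖ ^ 2 := by
    rw [norm_mul, mul_pow]; norm_num
  rw [h3]
  have h2 : (d i) ^ 2 ≤ c ^ 2 := by
    rw [← sq_abs]; exact pow_le_pow_left₀ (abs_nonneg _) (hd i) 2
  exact mul_le_mul_of_nonneg_right h2 (sq_nonneg _)

end MVAux

section AbstractProj
variable {F : Type*} [NormedAddCommGroup F] [InnerProductSpace ℝ F]

lemma abstract_proj_vi (K : Set F) (hK : Convex ℝ K) (proj : F → F) (hmem : ∀ x, proj x ∈ K)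
    (hnear : ∀ x, ∀ y ∈ K, dist x (proj x) ≤ dist x y) (x : F) :
    ∀ y ∈ K, ⟪x - proj x, y - proj x⟫ ≤ 0 := by
  haveI : Nonempty K := ⟨⟨_, hmem x⟩⟩
  refine (norm_eq_iInf_iff_real_inner_le_zero hK (hmem x)).1 ?_
  refine le_antisymm (le_ciInf fun w => ?_) (ciInf_le (f := fun w : K => ‖x - w‖) ⟨0, ?_⟩ ⟨_, hmem x⟩)
  · simpa [dist_eq_norm] using hnear x w w.2
  · rintro _ ⟨w, rfl⟩; exact norm_nonneg _

lemma abstract_proj_lip (K : Set F) (hK : Convex ℝ K) (proj : F → F) (hmem : ∀ x, proj x ∈ K)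
    (hnear : ∀ x, ∀ y ∈ K, dist x (proj x) ≤ dist x y) (x y : F) :
    ‖proj x - proj y‖ ≤ ‖x - y‖ := by
  set p := proj x
  set q := proj y
  have h1 : ⟪x - p, q - p⟫ ≤ 0 := abstract_proj_vi K hK proj hmem hnear x q (hmem y)
  have h2 : ⟪y - q, p - q⟫ ≤ 0 := abstract_proj_vi K hK proj hmem hnear y p (hmem x)
  have key : ‖p - q‖ ^ 2 ≤ ⟪x - y, p - q⟫ := by
    have e : ⟪x - y, p - q⟫ - ‖p - q‖ ^ 2 = -(⟪x - p, q - p⟫ + ⟪y - q, p - q⟫) := by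
      rw [← real_inner_self_eq_norm_sq]
      simp only [inner_sub_left, inner_sub_right]
      ring
    nlinarith
  have h3 : ⟪x - y, p - q⟫ ≤ ‖x - y‖ * ‖p - q‖ := real_inner_le_norm _ _
  nlinarith [norm_nonneg (p - q), norm_nonneg (x - y)]

end AbstractProj

namespace PDSetting
variable {m n r : ℕ} (S : PDSetting m n r)

lemma beta_pos (hS : S.IsValid) (k : ℕ) : 0 < S.beta k := by
  refine Finset.prod_pos fun i _ => inv_pos.2 ?_
  have := hS.halpha i; linarith

lemma beta_zero : S.beta 0 = 1 := by simp [beta]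

lemma beta_succ (k : ℕ) : S.beta (k + 1) = S.beta k * (1 + S.alpha k)⁻¹ := by
  rw [beta, beta, Finset.prod_range_succ]

lemma tau_pos (hS : S.IsValid) (k : ℕ) : 0 < S.tau k := by
  have hα := hS.halpha k
  have hβ := S.beta_pos hS k
  exact div_pos (mul_pos hβ (by linarith)) (pow_pos hα 2)

lemma sigma_convex (hS : S.IsValid) : Convex ℝ S.SigmaSet := by
  intro x hx y hy p q hp hq hpq i
  have hconv : Convex ℝ (S.box i) := (hS.hbox_int i).convex
  have : (p • x + q • y) i = p • x i + q • y i := rfl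
  rw [this]
  exact hconv (hx i) (hy i) hp hq hpq

lemma proj_lip (hS : S.IsValid) (x y : PrimalSpace m n) :
    ‖S.proj x - S.proj y‖ ≤ ‖x - y‖ :=
  abstract_proj_lip S.SigmaSet (S.sigma_convex hS) S.proj hS.hproj_mem hS.hproj_near x y

lemma step (hS : S.IsValid) (k : ℕ) :
    S.lamS k - S.lam k =
      (S.beta (k + 1))⁻¹ • (mv S.H (S.uS k) - S.b) -
        (S.beta k)⁻¹ • (mv S.H (S.u k) - S.b) := by
  have hb' : S.beta (k + 1) ≠ 0 := (S.beta_pos hS (k + 1)).ne'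
  have h0 := hS.hlamS k
  rw [Fk, lamTil, ← uS] at h0
  rw [sub_sub, sub_eq_zero] at h0
  apply smul_right_injective (DualSpace m n r) hb'
  simp only [smul_sub, smul_smul, mul_inv_cancel₀ hb', one_smul]
  rw [h0]
  simp only [smul_sub, smul_smul]
  abel

lemma onestep (hS : S.IsValid) (k : ℕ) :
    S.lam (k + 1) - S.lam k =
      (S.lam (k + 1) - S.lamS k + (S.beta (k + 1))⁻¹ • mv S.H (S.uS k - S.u (k + 1)))
        + (S.beta (k + 1))⁻¹ • (mv S.H (S.u (k + 1)) - S.b)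
        - (S.beta k)⁻¹ • (mv S.H (S.u k) - S.b) := by
  have hstep := S.step hS k
  have hlamS : S.lamS k = S.lam k +
      ((S.beta (k + 1))⁻¹ • (mv S.H (S.uS k) - S.b) -
        (S.beta k)⁻¹ • (mv S.H (S.u k) - S.b)) := by
    rw [← hstep]; abel
  rw [mv_sub, hlamS]
  simp only [smul_sub]
  abel

lemma telesc (hS : S.IsValid) (k : ℕ) :
    S.lam k - S.lam 0 =
      (S.beta k)⁻¹ • (mv S.H (S.u k) - S.b) - (mv S.H (S.u 0) - S.b) +
        ∑ i ∈ Finset.range k,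
          (S.lam (i + 1) - S.lamS i + (S.beta (i + 1))⁻¹ • mv S.H (S.uS i - S.u (i + 1))) := by
  induction k with
  | zero => simp [S.beta_zero]
  | succ k ih =>
    have hsplit : S.lam (k + 1) - S.lam 0 =
        (S.lam (k + 1) - S.lam k) + (S.lam k - S.lam 0) := by abel
    rw [hsplit, S.onestep hS k, ih, Finset.sum_range_succ]
    abel

lemma Ebound (hS : S.IsValid) (i : ℕ) :
    ‖S.lam (i + 1) - S.lamS i + (S.beta (i + 1))⁻¹ • mv S.H (S.uS i - S.u (i + 1))‖
      ≤ S.eps i * (1 + (S.alpha i) ^ 2 / (S.beta i) ^ 2 * specNorm S.H ^ 2) := by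
  have hα := hS.halpha i
  have hβ := S.beta_pos hS i
  have hβ' := S.beta_pos hS (i + 1)
  have hτ := S.tau_pos hS i
  have hH : (0 : ℝ) ≤ specNorm S.H := norm_nonneg _
  have hproj : ‖S.uS i - S.u (i + 1)‖ ≤ (S.tau i)⁻¹ * (specNorm S.H * S.eps i) := by
    rw [uS, hS.hu_upd i]
    refine le_trans (S.proj_lip hS _ _) ?_
    have hdiff : mv (S.Dmat i)⁻¹ (S.wk i - mv S.Hᵀ (S.lamS i)) -
        mv (S.Dmat i)⁻¹ (S.wk i - mv S.Hᵀ (S.lam (i + 1))) =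
        mv (S.Dmat i)⁻¹ (mv S.Hᵀ (S.lam (i + 1) - S.lamS i)) := by
      rw [← mv_sub, mv_sub S.Hᵀ]
      exact congrArg (mv (S.Dmat i)⁻¹) (by module)
    rw [hdiff]
    have hdj : ∀ j, S.tau i ≤ S.dEntry i j := by
      intro j
      rcases j with j | j
      · simp only [dEntry, eta, Sum.elim_inl]
        linarith [hS.hsigma]
      · simp [dEntry]
    have hdpos : ∀ j, 0 < S.dEntry i j := fun j => lt_of_lt_of_le hτ (hdj j)
    have hDinv : (S.Dmat i)⁻¹ = Matrix.diagonal (fun j => (S.dEntry i j)⁻¹) := by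
      apply Matrix.inv_eq_right_inv
      rw [Dmat, Matrix.diagonal_mul_diagonal, ← Matrix.diagonal_one]
      exact congrArg Matrix.diagonal (funext fun j => mul_inv_cancel₀ (hdpos j).ne')
    rw [hDinv]
    have hb1 : ∀ j, |(S.dEntry i j)⁻¹| ≤ (S.tau i)⁻¹ := by
      intro j
      rw [abs_of_pos (inv_pos.2 (hdpos j))]
      exact inv_anti₀ hτ (hdj j)
    refine le_trans (norm_mv_diagonal_le _ _ (inv_pos.2 hτ).le hb1 _) ?_
    refine mul_le_mul_of_nonneg_left ?_ (inv_pos.2 hτ).le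
    refine le_trans (norm_mv_le _ _) ?_
    rw [specNorm_transpose]
    exact mul_le_mul_of_nonneg_left (hS.hlam_err i) hH
  have h2 : ‖(S.beta (i + 1))⁻¹ • mv S.H (S.uS i - S.u (i + 1))‖
      ≤ (S.beta (i + 1))⁻¹ * (specNorm S.H * ((S.tau i)⁻¹ * (specNorm S.H * S.eps i))) := by
    rw [norm_smul, Real.norm_eq_abs, abs_of_pos (inv_pos.2 hβ')]
    refine mul_le_mul_of_nonneg_left ?_ (inv_pos.2 hβ').le
    exact le_trans (norm_mv_le _ _) (mul_le_mul_of_nonneg_left hproj hH)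
  have hβne : S.beta i ≠ 0 := hβ.ne'
  have hαne : S.alpha i ≠ 0 := hα.ne'
  have h1α : (1 : ℝ) + S.alpha i ≠ 0 := by positivity
  have harith : (S.beta (i + 1))⁻¹ * (specNorm S.H * ((S.tau i)⁻¹ * (specNorm S.H * S.eps i)))
      = S.eps i * ((S.alpha i) ^ 2 / (S.beta i) ^ 2 * specNorm S.H ^ 2) := by
    rw [S.beta_succ i, tau]
    field_simp
  calc ‖S.lam (i + 1) - S.lamS i + (S.beta (i + 1))⁻¹ • mv S.H (S.uS i - S.u (i + 1))‖
      ≤ ‖S.lam (i + 1) - S.lamS i‖ + ‖(S.beta (i + 1))⁻¹ • mv S.H (S.uS i - S.u (i + 1))‖ :=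
        norm_add_le _ _
    _ ≤ S.eps i + S.eps i * ((S.alpha i) ^ 2 / (S.beta i) ^ 2 * specNorm S.H ^ 2) :=
        add_le_add (hS.hlam_err i) (le_trans h2 harith.le)
    _ = S.eps i * (1 + (S.alpha i) ^ 2 / (S.beta i) ^ 2 * specNorm S.H ^ 2) := by ring

end PDSetting

/-- feasibility violation bound. -/
theorem stmt4 {m n r : ℕ} (S : PDSetting m n r) (hS : S.IsValid) (k : ℕ) :
    S.lam k - S.lam 0 =
        (S.beta k)⁻¹ • (mv S.H (S.u k) - S.b) - (mv S.H (S.u 0) - S.b) +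
          ∑ i ∈ Finset.range k,
            (S.lam (i + 1) - S.lamS i + (S.beta (i + 1))⁻¹ • mv S.H (S.uS i - S.u (i + 1))) ∧
      (∀ i, ‖S.lam (i + 1) - S.lamS i + (S.beta (i + 1))⁻¹ • mv S.H (S.uS i - S.u (i + 1))‖
          ≤ S.eps i * (1 + (S.alpha i) ^ 2 / (S.beta i) ^ 2 * specNorm S.H ^ 2)) ∧
      ‖mv S.H (S.u k) - S.b‖ ≤ S.beta k *
        (‖mv S.H (S.u 0) - S.b‖ + ‖S.lam k - S.lam 0‖ +
          ∑ i ∈ Finset.range k,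
            S.eps i * (1 + (S.alpha i) ^ 2 / (S.beta i) ^ 2 * specNorm S.H ^ 2)) := by
  have hid := S.telesc hS k
  refine ⟨hid, fun i => S.Ebound hS i, ?_⟩
  have hβ := S.beta_pos hS k
  have hkey : (S.beta k)⁻¹ • (mv S.H (S.u k) - S.b) =
      S.lam k - S.lam 0 + (mv S.H (S.u 0) - S.b) -
        ∑ i ∈ Finset.range k,
          (S.lam (i + 1) - S.lamS i + (S.beta (i + 1))⁻¹ • mv S.H (S.uS i - S.u (i + 1))) := by
    rw [hid]; abel
  have hnorm : ‖mv S.H (S.u k) - S.b‖ = S.beta k * ‖(S.beta k)⁻¹ • (mv S.H (S.u k) - S.b)‖ := by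
    rw [norm_smul, Real.norm_eq_abs, abs_of_pos (inv_pos.2 hβ)]
    field_simp
  rw [hnorm]
  refine mul_le_mul_of_nonneg_left ?_ hβ.le
  rw [hkey]
  calc ‖S.lam k - S.lam 0 + (mv S.H (S.u 0) - S.b) -
        ∑ i ∈ Finset.range k,
          (S.lam (i + 1) - S.lamS i + (S.beta (i + 1))⁻¹ • mv S.H (S.uS i - S.u (i + 1)))‖
      ≤ ‖S.lam k - S.lam 0 + (mv S.H (S.u 0) - S.b)‖ +
        ‖∑ i ∈ Finset.range k,
          (S.lam (i + 1) - S.lamS i + (S.beta (i + 1))⁻¹ • mv S.H (S.uS i - S.u (i + 1)))‖ :=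
        norm_sub_le _ _
    _ ≤ (‖S.lam k - S.lam 0‖ + ‖mv S.H (S.u 0) - S.b‖) +
        ∑ i ∈ Finset.range k,
          S.eps i * (1 + (S.alpha i) ^ 2 / (S.beta i) ^ 2 * specNorm S.H ^ 2) := by
        refine add_le_add (norm_add_le _ _) ?_
        exact le_trans (norm_sum_le _ _) (Finset.sum_le_sum fun i _ => S.Ebound hS i)
    _ = ‖mv S.H (S.u 0) - S.b‖ + ‖S.lam k - S.lam 0‖ +
        ∑ i ∈ Finset.range k,
          S.eps i * (1 + (S.alpha i) ^ 2 / (S.beta i) ^ 2 * specNorm S.H ^ 2) := by ring
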